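/- Fix 0 < δ < 0.1 and a positive integer n. Let (X_1, …, X_n, Y_1, …, Y_n) have the distribution P determined by independent {+1,−1}-valued A_1, …, A_n, B, C with E[A_t] = e^{−δ}, E[B] = e^{−2δ}, E[C] = 0, via X_i = C·∏_{t≤i} A_t and Y_i = B·C·∏_{t≤i} A_t. Let (X'_1, …, X'_n, Y'_1, …, Y'_n) have the distribution P' determined by independent {+1,−1}-valued W, Z_1, …, Z_n with E[Z_t] = e^{−δ} and E[W] = 0, via X'_i = Y'_i = W·∏_{t≤i} Z_t. Then: (a) the pairwise correlations of P' are multiplicative along the path tree with vertices ordered X_1, Y_1, X_2, Y_2, …, X_n, Y_n; and (b) for all i, j ∈ [n], E_{P'}[X'_i X'_j] = E_P[X_i X_j], E_{P'}[Y'_i Y'_j] = E_P[Y_i Y_j], and |E_P[X_i Y_j] − E_{P'}[X'_i Y'_j]| ≤ 1 − e^{−2δ} ≤ 2δ; in particular all pairwise correlations of P and P' agree up to additive error 2δ. -/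

import Mathlib

open MeasureTheory ProbabilityTheory SimpleGraph

/-- A symmetric function `μ` is multiplicative along a graph `G` if `μ u u = 1` and `μ u v`
is the product of `μ` over the edges of any (hence, in a tree, the unique) path from `u` to
`v`. -/
def MultAlong {V : Type*} (G : SimpleGraph V) (μ : V → V → ℝ) : Prop :=
  (∀ u : V, μ u u = 1) ∧
  ∀ (u v : V) (p : G.Walk u v), p.IsPath →
    μ u v = (p.darts.map fun d => μ d.fst d.snd).prod

/-- **The counterexample distribution `P` is close to the tree model `P'`.** Let `P` be the law
of `(X_i, Y_i)` built from independent `±1` variables `A_t, B, C` with `E[A_t] = e^{−δ}`,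
`E[B] = e^{−2δ}`, `E[C] = 0` via `X_i = C·∏_{t≤i}A_t`, `Y_i = B·C·∏_{t≤i}A_t`, and let `P'` be
the law of `(X'_i, Y'_i)` built from independent `±1` variables `W, Z_t` with `E[Z_t] = e^{−δ}`,
`E[W] = 0` via `X'_i = Y'_i = W·∏_{t≤i}Z_t`. Then (a) the pairwise correlations of `P'` are
multiplicative along the path tree with vertices ordered `X_1, Y_1, X_2, Y_2, …, X_n, Y_n`, and
(b) the corresponding pairwise correlations of `P` and `P'` agree exactly on the `XX` and `YY`
pairs and up to additive error `1 − e^{−2δ} ≤ 2δ` on the `XY` pairs. -/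
lemma sq_one' {x : ℝ} (h : x = 1 ∨ x = -1) : x * x = 1 := by rcases h with h | h <;> simp [h]

lemma prod_pm_mul {α : Type*} [DecidableEq α] (f : α → ℝ)
    (hf : ∀ x, f x = 1 ∨ f x = -1) (s t : Finset α) :
    (∏ x ∈ s, f x) * ∏ x ∈ t, f x = ∏ x ∈ symmDiff s t, f x := by
  rw [← Finset.prod_union_inter, ← Finset.sup_eq_union, ← Finset.inf_eq_inter,
    ← symmDiff_sup_inf s t, Finset.sup_eq_union,
    Finset.prod_union (disjoint_symmDiff_inf s t), mul_assoc, ← Finset.prod_mul_distrib]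
  have h1 : ∏ x ∈ s ⊓ t, (f x * f x) = 1 := Finset.prod_eq_one fun x _ => sq_one' (hf x)
  rw [h1, mul_one]

lemma integral_finset_prod_indep {Ω ι : Type*} [MeasurableSpace Ω] (μ : Measure Ω)
    [IsProbabilityMeasure μ] (f : ι → Ω → ℝ) (hmeas : ∀ i, Measurable (f i))
    (hindep : iIndepFun (m := fun _ => Real.measurableSpace) f μ) (S : Finset ι) :
    ∫ ω, ∏ i ∈ S, f i ω ∂μ = ∏ i ∈ S, ∫ ω, f i ω ∂μ := by
  classical
  induction S using Finset.induction with
  | empty => simp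
  | @insert a s ha ih =>
    simp only [Finset.prod_insert ha]
    have hI : IndepFun (f a) (∏ j ∈ s, f j) μ :=
      (hindep.indepFun_finsetProd_of_notMem hmeas ha).symm
    have hm : Measurable (∏ j ∈ s, f j) := by
      rw [Finset.prod_fn]; exact Finset.measurable_prod s fun i _ => hmeas i
    have h2 := hI.integral_fun_mul_eq_mul_integral (hmeas a).aestronglyMeasurable hm.aestronglyMeasurable
    simp only [Finset.prod_apply] at h2
    rw [h2]
    have h3 : integral μ (∏ j ∈ s, f j) = ∫ ω, ∏ i ∈ s, f i ω ∂μ := by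
      congr 1; rw [Finset.prod_fn]
    rw [ih]

lemma walk_lower {N : ℕ} {u : Fin N} : ∀ {w v : Fin N} (q : (pathGraph N).Walk w v),
    u ∉ q.support → u.val < w.val → u.val < v.val := by
  intro w v q
  induction q with
  | nil => exact fun _ h => h
  | @cons w y v h q ih =>
    intro hs hlt
    rw [SimpleGraph.Walk.support_cons, List.mem_cons] at hs
    push_neg at hs
    obtain ⟨hne, hs'⟩ := hs
    have huy : u.val ≠ y.val := fun e =>
      hs' ((Fin.ext e : u = y) ▸ q.start_mem_support)
    rcases pathGraph_adj.mp h with h1 | h1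
    · exact ih hs' (by omega)
    · exact ih hs' (by omega)

lemma walk_upper {N : ℕ} {u : Fin N} : ∀ {w v : Fin N} (q : (pathGraph N).Walk w v),
    u ∉ q.support → w.val < u.val → v.val < u.val := by
  intro w v q
  induction q with
  | nil => exact fun _ h => h
  | @cons w y v h q ih =>
    intro hs hlt
    rw [SimpleGraph.Walk.support_cons, List.mem_cons] at hs
    push_neg at hs
    obtain ⟨hne, hs'⟩ := hs
    have huy : u.val ≠ y.val := fun e =>
      hs' ((Fin.ext e : u = y) ▸ q.start_mem_support)
    rcases pathGraph_adj.mp h with h1 | h1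
    · exact ih hs' (by omega)
    · exact ih hs' (by omega)

lemma path_abs_sum {N : ℕ} (F : Fin N → ℝ) (hF : Monotone F) {u v : Fin N}
    (p : (pathGraph N).Walk u v) (hp : p.IsPath) :
    (p.darts.map fun d => |F d.fst - F d.snd|).sum = |F u - F v| := by
  induction p with
  | nil => simp
  | @cons u w v h q ih =>
    rw [SimpleGraph.Walk.darts_cons, List.map_cons, List.sum_cons]
    obtain ⟨hq, hu⟩ := (SimpleGraph.Walk.cons_isPath_iff h q).mp hp
    rw [ih hq]
    have hd1 : (⟨(u, w), h⟩ : (pathGraph N).Dart).fst = u := rfl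
    have hd2 : (⟨(u, w), h⟩ : (pathGraph N).Dart).snd = w := rfl
    rw [hd1, hd2]
    rcases pathGraph_adj.mp h with h1 | h1
    · have hv : u.val < v.val := walk_lower q hu (by omega)
      have h2 : F u ≤ F w := hF (by rw [Fin.le_def]; omega)
      have h3 : F w ≤ F v := hF (by rw [Fin.le_def]; omega)
      rw [abs_of_nonpos (by linarith), abs_of_nonpos (by linarith),
        abs_of_nonpos (by linarith)]
      ring
    · have hv : v.val < u.val := walk_upper q hu (by omega)
      have h2 : F w ≤ F u := hF (by rw [Fin.le_def]; omega)
      have h3 : F v ≤ F w := hF (by rw [Fin.le_def]; omega)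
      rw [abs_of_nonneg (by linarith), abs_of_nonneg (by linarith),
        abs_of_nonneg (by linarith)]
      ring

lemma list_prod_exp (c : ℝ) : ∀ (l : List ℝ),
    (l.map fun x => Real.exp (c * x)).prod = Real.exp (c * l.sum)
  | [] => by simp
  | x :: l => by
    simp [list_prod_exp c l, mul_add, Real.exp_add]

lemma card_symmDiff_Iic {n : ℕ} (a b : Fin n) :
    ((symmDiff (Finset.Iic a) (Finset.Iic b)).card : ℝ) = |(a.val : ℝ) - b.val| := by
  have key : ∀ a b : Fin n, a ≤ b →
      ((symmDiff (Finset.Iic a) (Finset.Iic b)).card : ℝ) = |(a.val : ℝ) - b.val| := by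
    intro a b h
    have hsub : Finset.Iic a ⊆ Finset.Iic b := Finset.Iic_subset_Iic.2 h
    rw [symmDiff_of_le hsub, Finset.card_sdiff_of_subset hsub, Fin.card_Iic, Fin.card_Iic]
    have hab : a.val ≤ b.val := h
    rw [abs_sub_comm, abs_of_nonneg (by simp; exact_mod_cast hab)]
    push_cast [Nat.succ_sub_succ, hab]
    ring
  rcases le_total a b with h | h
  · exact key a b h
  · rw [symmDiff_comm, abs_sub_comm]; exact key b a h

theorem counterexample_P_close_to_tree_model_P'
    {Ω : Type*} [MeasurableSpace Ω] (μ : Measure Ω) [IsProbabilityMeasure μ]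
    {Ω' : Type*} [MeasurableSpace Ω'] (μ' : Measure Ω') [IsProbabilityMeasure μ']
    (δ : ℝ) (hδ0 : 0 < δ) (hδ1 : δ < 0.1) (n : ℕ) (hn : 0 < n)
    -- the distribution P
    (A : Fin n → Ω → ℝ) (B C : Ω → ℝ)
    (hval : ∀ (i : Fin n ⊕ Bool) (ω : Ω),
      Sum.elim A (fun b => if b then C else B) i ω = 1 ∨
      Sum.elim A (fun b => if b then C else B) i ω = -1)
    (hmeas : ∀ i : Fin n ⊕ Bool, Measurable (Sum.elim A (fun b => if b then C else B) i))
    (hindep : iIndepFun (m := fun _ : Fin n ⊕ Bool => Real.measurableSpace)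
      (Sum.elim A (fun b => if b then C else B)) μ)
    (hA : ∀ t : Fin n, ∫ ω, A t ω ∂μ = Real.exp (-δ))
    (hB : ∫ ω, B ω ∂μ = Real.exp (-2 * δ))
    (hC : ∫ ω, C ω ∂μ = 0)
    (X Y : Fin n → Ω → ℝ)
    (hX : ∀ (i : Fin n) (ω : Ω), X i ω = C ω * ∏ t ∈ Finset.Iic i, A t ω)
    (hY : ∀ (i : Fin n) (ω : Ω), Y i ω = B ω * C ω * ∏ t ∈ Finset.Iic i, A t ω)
    -- the tree-structured distribution P'
    (Z : Fin n → Ω' → ℝ) (W : Ω' → ℝ)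
    (hval' : ∀ (i : Fin n ⊕ Unit) (ω : Ω'),
      Sum.elim Z (fun _ => W) i ω = 1 ∨ Sum.elim Z (fun _ => W) i ω = -1)
    (hmeas' : ∀ i : Fin n ⊕ Unit, Measurable (Sum.elim Z (fun _ => W) i))
    (hindep' : iIndepFun (m := fun _ : Fin n ⊕ Unit => Real.measurableSpace)
      (Sum.elim Z (fun _ => W)) μ')
    (hZ : ∀ t : Fin n, ∫ ω, Z t ω ∂μ' = Real.exp (-δ))
    (hW : ∫ ω, W ω ∂μ' = 0)
    (X' Y' : Fin n → Ω' → ℝ)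
    (hX' : ∀ (i : Fin n) (ω : Ω'), X' i ω = W ω * ∏ t ∈ Finset.Iic i, Z t ω)
    (hY' : ∀ (i : Fin n) (ω : Ω'), Y' i ω = W ω * ∏ t ∈ Finset.Iic i, Z t ω)
    -- the vertices of the path tree, in the order X_1, Y_1, X_2, Y_2, …, X_n, Y_n
    (R : Fin (2 * n) → Ω' → ℝ)
    (hR : ∀ (k : Fin (2 * n)) (ω : Ω'),
      R k ω = if (k : ℕ) % 2 = 0
        then X' ⟨(k : ℕ) / 2, by have := k.isLt; omega⟩ ω
        else Y' ⟨(k : ℕ) / 2, by have := k.isLt; omega⟩ ω) :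
    -- (a) the correlations of P' are multiplicative along the path tree
    MultAlong (pathGraph (2 * n)) (fun k l => ∫ ω, R k ω * R l ω ∂μ') ∧
    -- (b) the correlations of P and P' agree up to additive error 2δ
    (∀ i j : Fin n, ∫ ω, X' i ω * X' j ω ∂μ' = ∫ ω, X i ω * X j ω ∂μ) ∧
    (∀ i j : Fin n, ∫ ω, Y' i ω * Y' j ω ∂μ' = ∫ ω, Y i ω * Y j ω ∂μ) ∧
    (∀ i j : Fin n,
      |(∫ ω, X i ω * Y j ω ∂μ) - ∫ ω, X' i ω * Y' j ω ∂μ'| ≤ 1 - Real.exp (-2 * δ)) ∧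
    (1 - Real.exp (-2 * δ) ≤ 2 * δ) := by
  classical
  set G : Fin n ⊕ Bool → Ω → ℝ := Sum.elim A (fun b => if b then C else B) with hGdef
  set G' : Fin n ⊕ Unit → Ω' → ℝ := Sum.elim Z (fun _ => W) with hG'def
  have hGB : G (Sum.inr false) = B := by simp [hGdef]
  have hGC : G (Sum.inr true) = C := by simp [hGdef]
  have hA1 : ∀ (t : Fin n) (ω : Ω), A t ω = 1 ∨ A t ω = -1 := fun t ω => hval (Sum.inl t) ω
  have hB1 : ∀ ω, B ω = 1 ∨ B ω = -1 := fun ω => by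
    have := hval (Sum.inr false) ω; simpa [hGB] using this
  have hC1 : ∀ ω, C ω = 1 ∨ C ω = -1 := fun ω => by
    have := hval (Sum.inr true) ω; simpa [hGC] using this
  have hZ1 : ∀ (t : Fin n) (ω : Ω'), Z t ω = 1 ∨ Z t ω = -1 := fun t ω => hval' (Sum.inl t) ω
  have hW1 : ∀ ω, W ω = 1 ∨ W ω = -1 := fun ω => hval' (Sum.inr ()) ω
  set emb : Fin n ↪ Fin n ⊕ Bool := ⟨Sum.inl, Sum.inl_injective⟩ with hembdef
  set emb' : Fin n ↪ Fin n ⊕ Unit := ⟨Sum.inl, Sum.inl_injective⟩ with hemb'def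
  -- integral of products of A's
  have hprodA : ∀ s : Finset (Fin n),
      ∫ ω, ∏ t ∈ s, A t ω ∂μ = ∏ t ∈ s, Real.exp (-δ) := by
    intro s
    calc ∫ ω, ∏ t ∈ s, A t ω ∂μ
        = ∫ ω, ∏ k ∈ s.map emb, G k ω ∂μ :=
          integral_congr_ae (Filter.Eventually.of_forall fun ω => by
            dsimp only; rw [Finset.prod_map]; rfl)
      _ = ∏ k ∈ s.map emb, ∫ ω, G k ω ∂μ :=
          integral_finset_prod_indep μ G hmeas hindep _
      _ = ∏ t ∈ s, Real.exp (-δ) := by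
          rw [Finset.prod_map]; exact Finset.prod_congr rfl fun t _ => hA t
  have hprodZ : ∀ s : Finset (Fin n),
      ∫ ω, ∏ t ∈ s, Z t ω ∂μ' = ∏ t ∈ s, Real.exp (-δ) := by
    intro s
    calc ∫ ω, ∏ t ∈ s, Z t ω ∂μ'
        = ∫ ω, ∏ k ∈ s.map emb', G' k ω ∂μ' :=
          integral_congr_ae (Filter.Eventually.of_forall fun ω => by
            dsimp only; rw [Finset.prod_map]; rfl)
      _ = ∏ k ∈ s.map emb', ∫ ω, G' k ω ∂μ' :=
          integral_finset_prod_indep μ' G' hmeas' hindep' _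
      _ = ∏ t ∈ s, Real.exp (-δ) := by
          rw [Finset.prod_map]; exact Finset.prod_congr rfl fun t _ => hZ t
  -- integral of B times products of A's
  have hBprod : ∀ s : Finset (Fin n),
      ∫ ω, B ω * ∏ t ∈ s, A t ω ∂μ = Real.exp (-2 * δ) * ∏ t ∈ s, Real.exp (-δ) := by
    intro s
    have hnm : (Sum.inr false : Fin n ⊕ Bool) ∉ s.map emb := by
      simp [hembdef]
    have hI : IndepFun (G (Sum.inr false)) (∏ k ∈ s.map emb, G k) μ :=
      (hindep.indepFun_finsetProd_of_notMem hmeas hnm).symm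
    have hm : Measurable (∏ k ∈ s.map emb, G k) := by
      rw [Finset.prod_fn]; exact Finset.measurable_prod _ fun k _ => hmeas k
    have h2 := hI.integral_fun_mul_eq_mul_integral (hmeas _).aestronglyMeasurable hm.aestronglyMeasurable
    calc ∫ ω, B ω * ∏ t ∈ s, A t ω ∂μ
        = ∫ ω, G (Sum.inr false) ω * (∏ k ∈ s.map emb, G k) ω ∂μ :=
          integral_congr_ae (Filter.Eventually.of_forall fun ω => by
            dsimp only; rw [hGB, Finset.prod_apply, Finset.prod_map]; rfl)
      _ = integral μ (G (Sum.inr false)) * integral μ (∏ k ∈ s.map emb, G k) := h2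
      _ = Real.exp (-2 * δ) * ∏ t ∈ s, Real.exp (-δ) := by
          have e1 : integral μ (G (Sum.inr false)) = Real.exp (-2 * δ) := by
            rw [hGB]; exact hB
          have e2 : integral μ (∏ k ∈ s.map emb, G k) = ∏ t ∈ s, Real.exp (-δ) := by
            have : integral μ (∏ k ∈ s.map emb, G k)
                = ∫ ω, ∏ k ∈ s.map emb, G k ω ∂μ := by
              congr 1; rw [Finset.prod_fn]
            rw [this, integral_finset_prod_indep μ G hmeas hindep, Finset.prod_map]
            exact Finset.prod_congr rfl fun t _ => hA t
          rw [e1, e2]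
  -- correlations of P
  have hXX : ∀ i j : Fin n, ∫ ω, X i ω * X j ω ∂μ
      = ∏ t ∈ symmDiff (Finset.Iic i) (Finset.Iic j), Real.exp (-δ) := by
    intro i j
    have hpt : ∀ ω, X i ω * X j ω
        = ∏ t ∈ symmDiff (Finset.Iic i) (Finset.Iic j), A t ω := by
      intro ω
      have hd := prod_pm_mul (fun t => A t ω) (fun t => hA1 t ω) (Finset.Iic i) (Finset.Iic j)
      have hcc := sq_one' (hC1 ω)
      rw [hX, hX, ← hd]
      calc (C ω * ∏ t ∈ Finset.Iic i, A t ω) * (C ω * ∏ t ∈ Finset.Iic j, A t ω)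
          = (C ω * C ω) * ((∏ t ∈ Finset.Iic i, A t ω) * ∏ t ∈ Finset.Iic j, A t ω) := by
            ring
        _ = (∏ t ∈ Finset.Iic i, A t ω) * ∏ t ∈ Finset.Iic j, A t ω := by rw [hcc, one_mul]
    rw [integral_congr_ae (Filter.Eventually.of_forall hpt), hprodA]
  have hYY : ∀ i j : Fin n, ∫ ω, Y i ω * Y j ω ∂μ
      = ∏ t ∈ symmDiff (Finset.Iic i) (Finset.Iic j), Real.exp (-δ) := by
    intro i j
    have hpt : ∀ ω, Y i ω * Y j ω
        = ∏ t ∈ symmDiff (Finset.Iic i) (Finset.Iic j), A t ω := by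
      intro ω
      have hd := prod_pm_mul (fun t => A t ω) (fun t => hA1 t ω) (Finset.Iic i) (Finset.Iic j)
      have hcc := sq_one' (hC1 ω)
      have hbb := sq_one' (hB1 ω)
      rw [hY, hY, ← hd]
      calc (B ω * C ω * ∏ t ∈ Finset.Iic i, A t ω) * (B ω * C ω * ∏ t ∈ Finset.Iic j, A t ω)
          = (B ω * B ω) * ((C ω * C ω) *
              ((∏ t ∈ Finset.Iic i, A t ω) * ∏ t ∈ Finset.Iic j, A t ω)) := by ring
        _ = (∏ t ∈ Finset.Iic i, A t ω) * ∏ t ∈ Finset.Iic j, A t ω := by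
            rw [hcc, hbb, one_mul, one_mul]
    rw [integral_congr_ae (Filter.Eventually.of_forall hpt), hprodA]
  have hXY : ∀ i j : Fin n, ∫ ω, X i ω * Y j ω ∂μ
      = Real.exp (-2 * δ) * ∏ t ∈ symmDiff (Finset.Iic i) (Finset.Iic j), Real.exp (-δ) := by
    intro i j
    have hpt : ∀ ω, X i ω * Y j ω
        = B ω * ∏ t ∈ symmDiff (Finset.Iic i) (Finset.Iic j), A t ω := by
      intro ω
      have hd := prod_pm_mul (fun t => A t ω) (fun t => hA1 t ω) (Finset.Iic i) (Finset.Iic j)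
      have hcc := sq_one' (hC1 ω)
      rw [hX, hY, ← hd]
      calc (C ω * ∏ t ∈ Finset.Iic i, A t ω) * (B ω * C ω * ∏ t ∈ Finset.Iic j, A t ω)
          = B ω * ((C ω * C ω) *
              ((∏ t ∈ Finset.Iic i, A t ω) * ∏ t ∈ Finset.Iic j, A t ω)) := by ring
        _ = B ω * ((∏ t ∈ Finset.Iic i, A t ω) * ∏ t ∈ Finset.Iic j, A t ω) := by
            rw [hcc, one_mul]
    rw [integral_congr_ae (Filter.Eventually.of_forall hpt), hBprod]
  -- correlations of P'
  have hcorr' : ∀ i j : Fin n,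
      (∫ ω, (W ω * ∏ t ∈ Finset.Iic i, Z t ω) * (W ω * ∏ t ∈ Finset.Iic j, Z t ω) ∂μ')
      = ∏ t ∈ symmDiff (Finset.Iic i) (Finset.Iic j), Real.exp (-δ) := by
    intro i j
    have hpt : ∀ ω, (W ω * ∏ t ∈ Finset.Iic i, Z t ω) * (W ω * ∏ t ∈ Finset.Iic j, Z t ω)
        = ∏ t ∈ symmDiff (Finset.Iic i) (Finset.Iic j), Z t ω := by
      intro ω
      have hd := prod_pm_mul (fun t => Z t ω) (fun t => hZ1 t ω) (Finset.Iic i) (Finset.Iic j)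
      have hww := sq_one' (hW1 ω)
      rw [← hd]
      calc (W ω * ∏ t ∈ Finset.Iic i, Z t ω) * (W ω * ∏ t ∈ Finset.Iic j, Z t ω)
          = (W ω * W ω) * ((∏ t ∈ Finset.Iic i, Z t ω) * ∏ t ∈ Finset.Iic j, Z t ω) := by
            ring
        _ = (∏ t ∈ Finset.Iic i, Z t ω) * ∏ t ∈ Finset.Iic j, Z t ω := by rw [hww, one_mul]
    rw [integral_congr_ae (Filter.Eventually.of_forall hpt), hprodZ]
  have hXX' : ∀ i j : Fin n, ∫ ω, X' i ω * X' j ω ∂μ'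
      = ∏ t ∈ symmDiff (Finset.Iic i) (Finset.Iic j), Real.exp (-δ) := by
    intro i j
    rw [← hcorr' i j]
    exact integral_congr_ae (Filter.Eventually.of_forall fun ω => by dsimp only; rw [hX', hX'])
  have hYY' : ∀ i j : Fin n, ∫ ω, Y' i ω * Y' j ω ∂μ'
      = ∏ t ∈ symmDiff (Finset.Iic i) (Finset.Iic j), Real.exp (-δ) := by
    intro i j
    rw [← hcorr' i j]
    exact integral_congr_ae (Filter.Eventually.of_forall fun ω => by dsimp only; rw [hY', hY'])
  have hXY' : ∀ i j : Fin n, ∫ ω, X' i ω * Y' j ω ∂μ'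
      = ∏ t ∈ symmDiff (Finset.Iic i) (Finset.Iic j), Real.exp (-δ) := by
    intro i j
    rw [← hcorr' i j]
    exact integral_congr_ae (Filter.Eventually.of_forall fun ω => by dsimp only; rw [hX', hY'])
  -- bounds on the product
  have hprod_pos : ∀ i j : Fin n,
      0 ≤ ∏ t ∈ symmDiff (Finset.Iic i) (Finset.Iic j), Real.exp (-δ) :=
    fun i j => Finset.prod_nonneg fun t _ => (Real.exp_pos _).le
  have hexp_le_one : Real.exp (-δ) ≤ 1 := Real.exp_le_one_iff.mpr (by linarith)
  have hexp2_le_one : Real.exp (-2 * δ) ≤ 1 := Real.exp_le_one_iff.mpr (by linarith)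
  have hprod_le_one : ∀ i j : Fin n,
      (∏ t ∈ symmDiff (Finset.Iic i) (Finset.Iic j), Real.exp (-δ)) ≤ 1 :=
    fun i j => Finset.prod_le_one (fun t _ => (Real.exp_pos _).le) (fun t _ => hexp_le_one)
  -- correlations of R
  have hg : ∀ k : Fin (2 * n), ((k : ℕ) / 2) < n := fun k => by have := k.isLt; omega
  have hRpt : ∀ (k : Fin (2 * n)) (ω : Ω'),
      R k ω = W ω * ∏ t ∈ Finset.Iic (⟨(k : ℕ) / 2, hg k⟩ : Fin n), Z t ω := by
    intro k ω
    rw [hR]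
    split_ifs
    · rw [hX']
    · rw [hY']
  have hcorrR : ∀ k l : Fin (2 * n), (∫ ω, R k ω * R l ω ∂μ')
      = Real.exp (-δ * |(((k : ℕ) / 2 : ℕ) : ℝ) - (((l : ℕ) / 2 : ℕ) : ℝ)|) := by
    intro k l
    calc ∫ ω, R k ω * R l ω ∂μ'
        = ∫ ω, (W ω * ∏ t ∈ Finset.Iic (⟨(k : ℕ) / 2, hg k⟩ : Fin n), Z t ω) *
            (W ω * ∏ t ∈ Finset.Iic (⟨(l : ℕ) / 2, hg l⟩ : Fin n), Z t ω) ∂μ' :=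
          integral_congr_ae (Filter.Eventually.of_forall fun ω => by dsimp only; rw [hRpt, hRpt])
      _ = ∏ t ∈ symmDiff (Finset.Iic (⟨(k : ℕ) / 2, hg k⟩ : Fin n))
            (Finset.Iic (⟨(l : ℕ) / 2, hg l⟩ : Fin n)), Real.exp (-δ) := hcorr' _ _
      _ = Real.exp (-δ * |(((k : ℕ) / 2 : ℕ) : ℝ) - (((l : ℕ) / 2 : ℕ) : ℝ)|) := by
          rw [Finset.prod_const, ← Real.exp_nat_mul]
          congr 1
          rw [card_symmDiff_Iic]
          ring
  -- conclusion
  refine ⟨⟨fun u => ?_, fun u v p hp => ?_⟩, fun i j => ?_, fun i j => ?_, fun i j => ?_, ?_⟩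
  · show (∫ ω, R u ω * R u ω ∂μ') = 1
    rw [hcorrR u u]
    simp
  · show (∫ ω, R u ω * R v ω ∂μ')
      = (p.darts.map fun d => ∫ ω, R d.fst ω * R d.snd ω ∂μ').prod
    have hFmono : Monotone (fun k : Fin (2 * n) => (((k : ℕ) / 2 : ℕ) : ℝ)) := by
      intro a b hab
      exact Nat.cast_le.mpr (Nat.div_le_div_right hab)
    have hsum := path_abs_sum (fun k : Fin (2 * n) => (((k : ℕ) / 2 : ℕ) : ℝ)) hFmono p hp
    simp only [hcorrR]
    have hmm : (p.darts.map fun d => Real.exp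
          (-δ * |(((d.fst : ℕ) / 2 : ℕ) : ℝ) - (((d.snd : ℕ) / 2 : ℕ) : ℝ)|))
        = (p.darts.map fun d =>
            |(((d.fst : ℕ) / 2 : ℕ) : ℝ) - (((d.snd : ℕ) / 2 : ℕ) : ℝ)|).map
          (fun x => Real.exp (-δ * x)) := by
      rw [List.map_map]; rfl
    rw [hmm, list_prod_exp]
    congr 1
    rw [hsum]
  · rw [hXX' i j, hXX i j]
  · rw [hYY' i j, hYY i j]
  · rw [hXY i j, hXY' i j]
    have h1 := hprod_pos i j
    have h2 := hprod_le_one i j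
    have h3 := Real.exp_pos (-2 * δ)
    rw [abs_of_nonpos (by nlinarith)]
    nlinarith
  · linarith [Real.add_one_le_exp (-2 * δ)]
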